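/- Let R be a ring such that 2 belongs to the Jacobson radical J(R). Then R is a GWNC ring if and only if R is a GNC ring. -/
import Mathlib


def IsWeaklyNilCleanElem {R : Type*} [Ring R] (a : R) : Prop :=
  ∃ e q : R, IsIdempotentElem e ∧ IsNilpotent q ∧ (a = q + e ∨ a = q - e)

def IsGWNCRing (R : Type*) [Ring R] : Prop :=
  ∀ a : R, ¬IsUnit a → IsWeaklyNilCleanElem a

/-- A ring is GNC if every non-unit is the sum of an idempotent and a nilpotent. -/
def IsGNCRing (R : Type*) [Ring R] : Prop :=
  ∀ a : R, ¬IsUnit a → ∃ e q : R, IsIdempotentElem e ∧ IsNilpotent q ∧ a = q + e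

section Aux

variable {R : Type*} [Ring R]

/-- Elements of the Jacobson radical have a left quasi-inverse. -/
lemma aux_left_inv {x : R} (hx : x ∈ Ideal.jacobson (⊥ : Ideal R)) :
    ∃ z : R, z * (1 - x) = 1 := by
  obtain ⟨z, hz⟩ := Ideal.mem_jacobson_iff.mp hx (-1)
  rw [Ideal.mem_bot] at hz
  refine ⟨z, ?_⟩
  have key : z * (1 - x) - 1 = z * (-1) * x + z - 1 := by noncomm_ring
  rw [hz] at key
  exact sub_eq_zero.mp key

/-- `1 - x` is a unit for `x` in the Jacobson radical (noncommutative version). -/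
lemma aux_isUnit_one_sub {x : R} (hx : x ∈ Ideal.jacobson (⊥ : Ideal R)) :
    IsUnit (1 - x) := by
  obtain ⟨z, hz⟩ := aux_left_inv hx
  have hzx : -(z * x) ∈ Ideal.jacobson (⊥ : Ideal R) :=
    neg_mem (Ideal.mul_mem_left _ z hx)
  obtain ⟨w, hw⟩ := aux_left_inv hzx
  have hz' : z = 1 + z * x := by
    have : z * (1 - x) = z - z * x := by noncomm_ring
    rw [this] at hz
    linear_combination (norm := noncomm_ring) hz
  have hwz : w * z = 1 := by
    have : (1 : R) - -(z * x) = 1 + z * x := by noncomm_ring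
    rw [this] at hw
    rw [hz']; exact hw
  have hval : (1 - x) = w := by
    calc 1 - x = (w * z) * (1 - x) := by rw [hwz, one_mul]
    _ = w * (z * (1 - x)) := by rw [mul_assoc]
    _ = w := by rw [hz, mul_one]
  have hinv : (1 - x) * z = 1 := by rw [hval]; exact hwz
  exact ⟨⟨1 - x, z, hinv, hz⟩, rfl⟩

/-- If `u` is a unit and `2 ∈ J(R)`, then `u - 2` is a unit. -/
lemma aux_isUnit_sub_two (h2 : (2 : R) ∈ Ideal.jacobson (⊥ : Ideal R))
    {u : R} (hu : IsUnit u) : IsUnit (u - 2) := by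
  obtain ⟨v, rfl⟩ := hu
  have hj : (↑v⁻¹ : R) * 2 ∈ Ideal.jacobson (⊥ : Ideal R) :=
    Ideal.mul_mem_left _ _ h2
  have h1 : IsUnit ((1 : R) - ↑v⁻¹ * 2) := aux_isUnit_one_sub hj
  have key : (↑v : R) - 2 = ↑v * (1 - ↑v⁻¹ * 2) := by
    rw [mul_sub, mul_one, ← mul_assoc, Units.mul_inv, one_mul]
  rw [key]
  exact v.isUnit.mul h1

/-- If `2` is nilpotent, then `q + 2c` is nilpotent for any nilpotent `q`. -/
lemma aux_nilpotent_add (h2 : IsNilpotent (2 : R)) {q : R} (hq : IsNilpotent q)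
    (c : R) : IsNilpotent (q + 2 * c) := by
  obtain ⟨n, hn⟩ := h2
  obtain ⟨s, hs⟩ := hq
  have hswap : ∀ x y : R, x * (2 * y) = 2 * (x * y) := by
    intro x y
    rw [← mul_assoc, ← mul_assoc, ((Commute.ofNat_left 2 x).symm : x * 2 = 2 * x)]
  have key : ∀ k : ℕ, ∃ r : R, (q + 2 * c) ^ k = q ^ k + 2 * r := by
    intro k
    induction k with
    | zero => exact ⟨0, by simp⟩
    | succ k ih =>
      obtain ⟨r, hr⟩ := ih
      refine ⟨q ^ k * c + r * q + r * (2 * c), ?_⟩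
      rw [pow_succ, hr]
      calc (q ^ k + 2 * r) * (q + 2 * c)
          = q ^ k * q + q ^ k * (2 * c) + (2 * r) * q + (2 * r) * (2 * c) := by
            noncomm_ring
        _ = q ^ k * q + 2 * (q ^ k * c) + 2 * (r * q) + 2 * (r * (2 * c)) := by
            rw [hswap, mul_assoc 2 r q, mul_assoc 2 r (2 * c)]
        _ = q ^ k * q + 2 * (q ^ k * c + r * q + r * (2 * c)) := by
            rw [mul_add, mul_add]; noncomm_ring
        _ = q ^ (k + 1) + 2 * (q ^ k * c + r * q + r * (2 * c)) := by
            rw [pow_succ]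
  obtain ⟨r, hr⟩ := key s
  rw [hs, zero_add] at hr
  refine ⟨s * n, ?_⟩
  rw [pow_mul, hr, (Commute.ofNat_left 2 r).mul_pow, hn, zero_mul]

/-- In a GWNC ring with `2 ∈ J(R)` (and `R` nontrivial), `2` is nilpotent. -/
lemma aux_two_nilpotent [Nontrivial R] (h2 : (2 : R) ∈ Ideal.jacobson (⊥ : Ideal R))
    (hW : IsGWNCRing R) : IsNilpotent (2 : R) := by
  have hnu2 : ¬IsUnit (2 : R) := by
    intro hu
    obtain ⟨v, hv⟩ := hu
    have h1 : (1 : R) ∈ Ideal.jacobson (⊥ : Ideal R) := by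
      have := Ideal.mul_mem_left _ (↑v⁻¹ : R) h2
      rwa [← hv, Units.inv_mul] at this
    have := aux_isUnit_one_sub h1
    rw [sub_self] at this
    exact not_isUnit_zero this
  obtain ⟨e, q, he, hq, hor⟩ := hW 2 hnu2
  rcases hor with h | h
  · -- 2 = q + e, so e = 2 - q
    have he' : e = 2 - q := by rw [h]; noncomm_ring
    have hee : e * e = e := he
    rw [he'] at hee
    have key : (q - 1) * (q - 2) = (2 - q) * (2 - q) - (2 - q) := by
      noncomm_ring
      simp [smul_eq_mul]
    rw [hee, sub_self] at key
    have hu : IsUnit (q - 1) := hq.isUnit_sub_one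
    obtain ⟨u, hu'⟩ := hu
    have : q - 2 = 0 := by
      have h0 : (↑u⁻¹ : R) * ((q - 1) * (q - 2)) = 0 := by rw [key, mul_zero]
      rwa [← hu', ← mul_assoc, Units.inv_mul, one_mul] at h0
    have hq2 : q = 2 := by linear_combination (norm := noncomm_ring) this
    rwa [hq2] at hq
  · -- 2 = q - e, so e = q - 2
    have he' : e = q - 2 := by rw [h]; noncomm_ring
    have hee : e * e = e := he
    rw [he'] at hee
    have key : (q - 2) * (q - 3) = (q - 2) * (q - 2) - (q - 2) := by noncomm_ring
    rw [hee, sub_self] at key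
    have hu : IsUnit (q - 3) := by
      have := aux_isUnit_sub_two h2 hq.isUnit_sub_one
      have h3 : q - 1 - 2 = q - 3 := by
        noncomm_ring
        simp [smul_eq_mul]
        norm_num
      rwa [h3] at this
    obtain ⟨u, hu'⟩ := hu
    have : q - 2 = 0 := by
      have h0 : ((q - 2) * (q - 3)) * (↑u⁻¹ : R) = 0 := by rw [key, zero_mul]
      rwa [mul_assoc, ← hu', Units.mul_inv, mul_one] at h0
    have hq2 : q = 2 := by linear_combination (norm := noncomm_ring) this
    rwa [hq2] at hq

end Aux

theorem isGWNC_iff_isGNC_of_two_mem_jacobson {R : Type*} [Ring R]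
    (h2 : (2 : R) ∈ Ideal.jacobson (⊥ : Ideal R)) :
    IsGWNCRing R ↔ IsGNCRing R := by
  rcases subsingleton_or_nontrivial R with hs | hs
  · constructor <;> intro _ a ha <;> exact absurd (isUnit_of_subsingleton a) ha
  · constructor
    · intro hW a ha
      obtain ⟨e, q, he, hq, hor⟩ := hW a ha
      rcases hor with h | h
      · exact ⟨e, q, he, hq, h⟩
      · have h2n : IsNilpotent (2 : R) := aux_two_nilpotent h2 hW
        refine ⟨e, q + 2 * (-e), he, aux_nilpotent_add h2n hq (-e), ?_⟩
        rw [h]; noncomm_ring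
    · intro hG a ha
      obtain ⟨e, q, he, hq, h⟩ := hG a ha
      exact ⟨e, q, he, hq, Or.inl h⟩
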